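/- Fix a real number δ with 0 < δ ≤ 1/2. There exists a constant C > 0 depending only on δ such that for all integers d > 1 and all integers n ≥ 2, one has (1/d) ∑_{h=1}^{d−1} (1 − δ + δ·cos(2πh/d))^{n/2} ≤ C·(log n)/√n, where the base 1 − δ + δ·cos(2πh/d) is a nonnegative real number and the exponent n/2 denotes a real power. -/

import Mathlib

open Finset Real

lemma geom_aux (x : ℝ) (hx : 0 < x) (S : Finset ℕ) :
    ∑ h ∈ S, Real.exp (-x) * Real.exp (-x) ^ h ≤ 1 / x := by
  have hr0 : (0:ℝ) ≤ Real.exp (-x) := (Real.exp_pos _).le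
  have hr1 : Real.exp (-x) < 1 := Real.exp_lt_one_iff.2 (by linarith)
  have h1 : ∑ h ∈ S, Real.exp (-x) ^ h ≤ (1 - Real.exp (-x))⁻¹ := by
    rw [← tsum_geometric_of_lt_one hr0 hr1]
    exact Summable.sum_le_tsum S (fun i _ => pow_nonneg hr0 i)
      (summable_geometric_of_lt_one hr0 hr1)
  rw [← Finset.mul_sum]
  have h2 : Real.exp (-x) * (1 - Real.exp (-x))⁻¹ ≤ 1 / x := by
    rw [← div_eq_mul_inv, div_le_div_iff₀ (by linarith) hx]
    have hre : Real.exp (-x) * Real.exp x = 1 := by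
      rw [← Real.exp_add]; simp
    have hx1 : x + 1 ≤ Real.exp x := Real.add_one_le_exp x
    nlinarith [mul_le_mul_of_nonneg_left hx1 hr0]
  calc Real.exp (-x) * ∑ h ∈ S, Real.exp (-x) ^ h
      ≤ Real.exp (-x) * (1 - Real.exp (-x))⁻¹ :=
        mul_le_mul_of_nonneg_left h1 hr0
    _ ≤ 1 / x := h2

lemma sumexp_le (a : ℝ) (ha : 0 < a) (S : Finset ℕ) (hS : ∀ h ∈ S, 1 ≤ h) :
    ∑ h ∈ S, Real.exp (-(a * (h:ℝ)^2)) ≤ 4 / Real.sqrt a := by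
  have hsa : 0 < Real.sqrt a := Real.sqrt_pos.2 ha
  rcases le_or_gt 1 a with h1 | h1
  · -- a ≥ 1
    have step : ∀ h ∈ S, Real.exp (-(a * (h:ℝ)^2))
        ≤ Real.exp (-(a/2)) * Real.exp (-(a/2)) ^ h := by
      intro h hh
      rw [← Real.exp_nat_mul, ← Real.exp_add]
      apply Real.exp_le_exp.2
      have hh1 : (1:ℝ) ≤ (h:ℝ) := by exact_mod_cast hS h hh
      nlinarith [mul_nonneg ha.le (mul_nonneg (sub_nonneg.2 hh1)
        (by positivity : (0:ℝ) ≤ 2*(h:ℝ)+1))]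
    calc ∑ h ∈ S, Real.exp (-(a * (h:ℝ)^2))
        ≤ ∑ h ∈ S, Real.exp (-(a/2)) * Real.exp (-(a/2)) ^ h :=
          Finset.sum_le_sum step
      _ ≤ 1 / (a/2) := geom_aux (a/2) (by linarith) S
      _ = 2 / a := by ring
      _ ≤ 4 / Real.sqrt a := by
          rw [div_le_div_iff₀ ha hsa]
          have h2 : Real.sqrt a ≤ a := by
            nlinarith [Real.sq_sqrt ha.le, Real.one_le_sqrt.2 h1]
          linarith
  · -- a < 1
    set N := ⌈(Real.sqrt a)⁻¹⌉₊ with hN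
    have hNge : (Real.sqrt a)⁻¹ ≤ (N:ℝ) := Nat.le_ceil _
    have hNle : (N:ℝ) < (Real.sqrt a)⁻¹ + 1 :=
      Nat.ceil_lt_add_one (by positivity)
    have hsa1 : (1:ℝ) ≤ (Real.sqrt a)⁻¹ := by
      have hle : Real.sqrt a ≤ 1 := by
        rw [show (1:ℝ) = Real.sqrt 1 by simp]
        exact Real.sqrt_le_sqrt h1.le
      rw [le_inv_comm₀ one_pos hsa]
      simpa using hle
    have hN1 : (1:ℝ) ≤ (N:ℝ) := le_trans hsa1 hNge
    rw [← Finset.sum_filter_add_sum_filter_not S (fun h => h ≤ N)]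
    have part1 : ∑ h ∈ S.filter (fun h => h ≤ N), Real.exp (-(a * (h:ℝ)^2))
        ≤ (N:ℝ) := by
      calc ∑ h ∈ S.filter (fun h => h ≤ N), Real.exp (-(a * (h:ℝ)^2))
          ≤ ∑ h ∈ S.filter (fun h => h ≤ N), 1 := by
            apply Finset.sum_le_sum
            intro i _
            apply Real.exp_le_one_iff.2
            have : (0:ℝ) ≤ a * (i:ℝ)^2 := by positivity
            linarith
        _ = ((S.filter (fun h => h ≤ N)).card : ℝ) := by simp
        _ ≤ (N:ℝ) := by
            have hsub : S.filter (fun h => h ≤ N) ⊆ Finset.Icc 1 N := by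
              intro x hx
              simp only [Finset.mem_filter] at hx
              exact Finset.mem_Icc.2 ⟨hS x hx.1, hx.2⟩
            have := Finset.card_le_card hsub
            rw [Nat.card_Icc] at this
            exact_mod_cast le_trans (Nat.cast_le.2 this) (by simp)
    have part2 : ∑ h ∈ S.filter (fun h => ¬ h ≤ N), Real.exp (-(a * (h:ℝ)^2))
        ≤ 1 / (a * N) := by
      have haN : 0 < a * (N:ℝ) := by positivity
      calc ∑ h ∈ S.filter (fun h => ¬ h ≤ N), Real.exp (-(a * (h:ℝ)^2))
          ≤ ∑ h ∈ S.filter (fun h => ¬ h ≤ N),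
              Real.exp (-(a * N)) * Real.exp (-(a * N)) ^ h := by
            apply Finset.sum_le_sum
            intro h hh
            simp only [Finset.mem_filter, not_le] at hh
            have hh1 : (N:ℝ) + 1 ≤ (h:ℝ) := by exact_mod_cast hh.2
            rw [← Real.exp_nat_mul, ← Real.exp_add]
            apply Real.exp_le_exp.2
            have hfact : (N:ℝ)*(h:ℝ) + (N:ℝ) ≤ (h:ℝ)^2 := by
              nlinarith [mul_nonneg (by positivity : (0:ℝ) ≤ (h:ℝ))
                (by linarith : (0:ℝ) ≤ (h:ℝ) - (N:ℝ) - 1)]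
            nlinarith [mul_le_mul_of_nonneg_left hfact ha.le]
        _ ≤ 1 / (a * N) := geom_aux _ haN _
    have hkey : (N:ℝ) + 1 / (a * (N:ℝ)) ≤ 4 / Real.sqrt a := by
      have h1aN : 1 / (a * (N:ℝ)) ≤ 1 / Real.sqrt a := by
        apply one_div_le_one_div_of_le hsa
        have : Real.sqrt a * Real.sqrt a = a := Real.mul_self_sqrt ha.le
        calc Real.sqrt a = a * (Real.sqrt a)⁻¹ := by
              field_simp; exact Real.sq_sqrt ha.le
          _ ≤ a * N := by
              apply mul_le_mul_of_nonneg_left hNge ha.le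
      have h4 : 4 / Real.sqrt a = 4 * (Real.sqrt a)⁻¹ := by ring
      have h1s : 1 / Real.sqrt a = (Real.sqrt a)⁻¹ := one_div _
      rw [h4]
      rw [h1s] at h1aN
      linarith
    linarith



lemma term_bound (δ : ℝ) (hδ0 : 0 < δ) (hδ : δ ≤ 1/2) (d h n : ℕ)
    (h1 : 1 ≤ h) (h2 : h < d) :
    (1 - δ + δ * Real.cos (2 * Real.pi * h / d)) ^ ((n : ℝ) / 2)
      ≤ Real.exp (-(4*δ*n/(d:ℝ)^2 * (h:ℝ)^2))
        + Real.exp (-(4*δ*n/(d:ℝ)^2 * ((d-h:ℕ):ℝ)^2)) := by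
  have hdpos : (0:ℝ) < d := by
    have : 0 < d := by omega
    exact_mod_cast this
  set m : ℕ := min h (d - h) with hm
  have hm1 : 1 ≤ m := by omega
  have hm2 : 2 * m ≤ d := by omega
  have hcast : ((d - h : ℕ) : ℝ) = (d:ℝ) - h := by
    rw [Nat.cast_sub h2.le]
  have hcos : Real.cos (2 * Real.pi * h / d) = Real.cos (2 * Real.pi * m / d) := by
    rcases le_or_gt h (d - h) with hc | hc
    · rw [hm, min_eq_left hc]
    · rw [hm, min_eq_right hc.le]
      have harg : 2 * Real.pi * ((d - h : ℕ) : ℝ) / d = -(2 * Real.pi * h / d) + 2 * Real.pi := by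
        rw [hcast]; field_simp; ring
      rw [harg, Real.cos_add_two_pi, Real.cos_neg]
  have hang0 : 0 ≤ 2 * Real.pi * (m:ℝ) / d := by positivity
  have hangpi : 2 * Real.pi * (m:ℝ) / d ≤ Real.pi := by
    rw [div_le_iff₀ hdpos]
    have h2m : 2 * (m:ℝ) ≤ (d:ℝ) := by exact_mod_cast hm2
    nlinarith [Real.pi_pos]
  have hub : Real.cos (2 * Real.pi * (m:ℝ) / d) ≤ 1 - 2 / Real.pi ^ 2 * (2 * Real.pi * (m:ℝ) / d) ^ 2 :=
    Real.cos_le_one_sub_mul_cos_sq (by rw [abs_of_nonneg hang0]; exact hangpi)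
  have hsimp : 2 / Real.pi ^ 2 * (2 * Real.pi * (m:ℝ) / d) ^ 2 = 8 * (m:ℝ)^2 / (d:ℝ)^2 := by
    field_simp
    ring
  set b : ℝ := 1 - δ + δ * Real.cos (2 * Real.pi * h / d) with hb
  have hb0 : 0 ≤ b := by
    have hcc := Real.neg_one_le_cos (2 * Real.pi * (h:ℝ) / d)
    rw [hb]
    nlinarith
  have hble : b ≤ Real.exp (-(8 * δ * (m:ℝ)^2 / (d:ℝ)^2)) := by
    have h1b : b ≤ 1 - 8 * δ * (m:ℝ)^2 / (d:ℝ)^2 := by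
      rw [hb, hcos]
      rw [hsimp] at hub
      have key := mul_le_mul_of_nonneg_left hub hδ0.le
      have hexpand : δ * (1 - 8 * (m:ℝ)^2 / (d:ℝ)^2) = δ - 8 * δ * (m:ℝ)^2 / (d:ℝ)^2 := by
        ring
      rw [hexpand] at key
      linarith
    have h2b := Real.add_one_le_exp (-(8 * δ * (m:ℝ)^2 / (d:ℝ)^2))
    linarith
  have hrpow : b ^ ((n:ℝ)/2) ≤ Real.exp (-(8 * δ * (m:ℝ)^2 / (d:ℝ)^2)) ^ ((n:ℝ)/2) :=
    Real.rpow_le_rpow hb0 hble (by positivity)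
  have hexp : Real.exp (-(8 * δ * (m:ℝ)^2 / (d:ℝ)^2)) ^ ((n:ℝ)/2)
      = Real.exp (-(4 * δ * n / (d:ℝ)^2 * (m:ℝ)^2)) := by
    rw [← Real.exp_mul]
    congr 1
    ring
  have hfin : Real.exp (-(4 * δ * n / (d:ℝ)^2 * (m:ℝ)^2))
      ≤ Real.exp (-(4*δ*n/(d:ℝ)^2 * (h:ℝ)^2))
        + Real.exp (-(4*δ*n/(d:ℝ)^2 * ((d-h:ℕ):ℝ)^2)) := by
    rcases le_or_gt h (d - h) with hc | hc
    · rw [hm, min_eq_left hc]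
      exact le_add_of_nonneg_right (Real.exp_pos _).le
    · rw [hm, min_eq_right hc.le]
      exact le_add_of_nonneg_left (Real.exp_pos _).le
  calc b ^ ((n:ℝ)/2) ≤ _ := hrpow
    _ = _ := hexp
    _ ≤ _ := hfin

theorem statement5 (δ : ℝ) (hδ0 : 0 < δ) (hδ : δ ≤ 1 / 2) :
    ∃ C : ℝ, 0 < C ∧ ∀ d : ℕ, 1 < d → ∀ n : ℕ, 2 ≤ n →
      (1 / (d : ℝ)) * ∑ h ∈ Finset.Ico 1 d,
          (1 - δ + δ * Real.cos (2 * Real.pi * h / d)) ^ ((n : ℝ) / 2)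
        ≤ C * Real.log n / Real.sqrt n := by
  have hlog2 : 0 < Real.log 2 := Real.log_pos (by norm_num)
  have hsδ : 0 < Real.sqrt δ := Real.sqrt_pos.2 hδ0
  refine ⟨4 / (Real.sqrt δ * Real.log 2), by positivity, ?_⟩
  intro d hd n hn
  have hdpos : (0:ℝ) < d := by positivity
  have hnpos : (0:ℝ) < n := by
    have : (2:ℝ) ≤ n := by exact_mod_cast hn
    linarith
  have hsn : 0 < Real.sqrt n := Real.sqrt_pos.2 hnpos
  set a : ℝ := 4*δ*n/(d:ℝ)^2 with ha
  have hapos : 0 < a := by positivity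
  have hsum : ∑ h ∈ Finset.Ico 1 d,
      (1 - δ + δ * Real.cos (2 * Real.pi * h / d)) ^ ((n : ℝ) / 2)
      ≤ ∑ h ∈ Finset.Ico 1 d, (Real.exp (-(a * (h:ℝ)^2))
          + Real.exp (-(a * ((d-h:ℕ):ℝ)^2))) := by
    apply Finset.sum_le_sum
    intro h hh
    rw [Finset.mem_Ico] at hh
    exact term_bound δ hδ0 hδ d h n hh.1 hh.2
  rw [Finset.sum_add_distrib] at hsum
  have hre : ∑ h ∈ Finset.Ico 1 d, Real.exp (-(a * ((d-h:ℕ):ℝ)^2))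
      = ∑ h ∈ Finset.Ico 1 d, Real.exp (-(a * (h:ℝ)^2)) := by
    apply Finset.sum_nbij' (i := fun h => d - h) (j := fun h => d - h)
    · intro x hx; rw [Finset.mem_Ico] at hx ⊢; omega
    · intro x hx; rw [Finset.mem_Ico] at hx ⊢; omega
    · intro x hx; rw [Finset.mem_Ico] at hx; omega
    · intro x hx; rw [Finset.mem_Ico] at hx; omega
    · intro x hx; rfl
  have hIco : ∀ h ∈ Finset.Ico 1 d, 1 ≤ h := fun h hh => (Finset.mem_Ico.1 hh).1
  have hb := sumexp_le a hapos (Finset.Ico 1 d) hIco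
  have htot : ∑ h ∈ Finset.Ico 1 d,
      (1 - δ + δ * Real.cos (2 * Real.pi * h / d)) ^ ((n : ℝ) / 2)
      ≤ 8 / Real.sqrt a := by
    rw [hre] at hsum
    calc _ ≤ _ := hsum
      _ ≤ 4 / Real.sqrt a + 4 / Real.sqrt a := by linarith
      _ = 8 / Real.sqrt a := by ring
  have hsqa : Real.sqrt a = 2 * Real.sqrt δ * Real.sqrt n / (d:ℝ) := by
    rw [show a = (2 * Real.sqrt δ * Real.sqrt n / (d:ℝ))^2 by
      rw [div_pow, mul_pow, mul_pow, Real.sq_sqrt hδ0.le, Real.sq_sqrt hnpos.le]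
      ring]
    exact Real.sqrt_sq (by positivity)
  have hlog : Real.log 2 ≤ Real.log n :=
    Real.log_le_log (by norm_num) (by exact_mod_cast hn)
  calc (1 / (d : ℝ)) * ∑ h ∈ Finset.Ico 1 d,
          (1 - δ + δ * Real.cos (2 * Real.pi * h / d)) ^ ((n : ℝ) / 2)
      ≤ (1 / (d:ℝ)) * (8 / Real.sqrt a) := by
        apply mul_le_mul_of_nonneg_left htot (by positivity)
    _ = 4 / (Real.sqrt δ * Real.sqrt n) := by
        rw [hsqa]; field_simp; ring
    _ ≤ 4 / (Real.sqrt δ * Real.log 2) * Real.log n / Real.sqrt n := by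
        rw [div_le_div_iff₀ (by positivity) hsn, div_mul_eq_mul_div,
          div_mul_eq_mul_div, le_div_iff₀ (by positivity)]
        nlinarith [mul_le_mul_of_nonneg_left hlog
          (by positivity : (0:ℝ) ≤ 4 * (Real.sqrt δ * Real.sqrt n)), hsδ.le, hsn.le]
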